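/- arXiv:1511.02551 — 4 statements merged into one kernel-verified Lean document; each statement's English description precedes it below -/
import Mathlib

section
/- Let G = ⟨f₁,…,f_k⟩ be a Möbius semigroup with J_ker(G⁻¹) = ∅ and J(G⁻¹) ≠ ∅, let a ∈ ℂ̂, and let (i₁,i₂,…) ∈ Σ_k^+ be a sequence such that the empirical measures μ^a_{i₁,…,i_n} converge weakly, as n → ∞, to a Borel probability measure on ℂ̂ whose support equals J(G). Then J(G) ⊆ closure(⋃_{j=0}^∞ {z_{i₁,…,i_j}}) (where z with empty index string is a). If moreover a ∈ J(G), then J(G) = closure(⋃_{j=0}^∞ {z_{i₁,…,i_j}}). -/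
open MeasureTheory Topology Filter Set

noncomputable section

instance : MeasurableSpace (OnePoint ℂ) := borel _
instance : BorelSpace (OnePoint ℂ) := ⟨rfl⟩

/-- `f` is a Möbius map: a self-homeomorphism of the Riemann sphere extending
`z ↦ (az+b)/(cz+d)` with `ad - bc ≠ 0`. -/
def IsMobius (f : OnePoint ℂ → OnePoint ℂ) : Prop :=
  IsHomeomorph f ∧ ∃ a b c d : ℂ, a * d - b * c ≠ 0 ∧
    ∀ z : ℂ, c * z + d ≠ 0 → f (z : OnePoint ℂ) = (((a * z + b) / (c * z + d) : ℂ) : OnePoint ℂ)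

/-- The semigroup generated by `f 0, …, f (k-1)`: all finite compositions. -/
def genSemigroup {k : ℕ} (f : Fin k → OnePoint ℂ → OnePoint ℂ) :
    Set (OnePoint ℂ → OnePoint ℂ) :=
  { g | ∃ l : List (Fin k), l ≠ [] ∧ g = l.foldr (fun i h => f i ∘ h) id }

/-- The Fatou set of a family `G` of self-maps of the sphere: points having an open
neighborhood on which `G` is equicontinuous (w.r.t. the unique uniformity compatible
with the compact Hausdorff topology). -/
def fatouSet (G : Set (OnePoint ℂ → OnePoint ℂ)) : Set (OnePoint ℂ) :=
  letI : UniformSpace (OnePoint ℂ) := uniformSpaceOfCompactR1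
  { z | ∃ U : Set (OnePoint ℂ), IsOpen U ∧ z ∈ U ∧
      EquicontinuousOn (fun g : G => (g : OnePoint ℂ → OnePoint ℂ)) U }

/-- The Julia set: complement of the Fatou set. -/
def juliaSet (G : Set (OnePoint ℂ → OnePoint ℂ)) : Set (OnePoint ℂ) :=
  (fatouSet G)ᶜ

/-- The kernel Julia set `⋂_{g ∈ G} g⁻¹(J(G))`. -/
def kernelJulia (G : Set (OnePoint ℂ → OnePoint ℂ)) : Set (OnePoint ℂ) :=
  ⋂ g ∈ G, g ⁻¹' (juliaSet G)

/-- The exceptional set: points whose backward orbit `⋃_{g ∈ G} g⁻¹({z})` is finite. -/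
def excSet (G : Set (OnePoint ℂ → OnePoint ℂ)) : Set (OnePoint ℂ) :=
  { z | Set.Finite { w | ∃ g ∈ G, g w = z } }

/-- The random backward orbit: `bwdPt finv a ω 0 = a` and
`bwdPt finv a ω (n+1) = f_{ω n}⁻¹ (bwdPt finv a ω n)`, i.e. `z_{i₁,…,i_n}` where
`i_{m+1} = ω m`. -/
def bwdPt {k : ℕ} (finv : Fin k → OnePoint ℂ → OnePoint ℂ) (a : OnePoint ℂ)
    (ω : ℕ → Fin k) : ℕ → OnePoint ℂ
  | 0 => a
  | n + 1 => finv (ω n) (bwdPt finv a ω n)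

/-- `z_{i₁,…,i_n} = f_{i_n}⁻¹∘⋯∘f_{i₁}⁻¹(a)` for a finite word `w = (i₁,…,i_n)`. -/
def wordPt {k : ℕ} (finv : Fin k → OnePoint ℂ → OnePoint ℂ) (a : OnePoint ℂ)
    {n : ℕ} (w : Fin n → Fin k) : OnePoint ℂ :=
  (List.ofFn w).foldl (fun x i => finv i x) a

/-- The measure `μ_n^{a,b} = ∑_{i₁,…,i_n} b_{i₁}⋯b_{i_n} δ_{z_{i₁,…,i_n}}`. -/
def muN {k : ℕ} (finv : Fin k → OnePoint ℂ → OnePoint ℂ) (b : Fin k → NNReal)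
    (a : OnePoint ℂ) (n : ℕ) : Measure (OnePoint ℂ) :=
  ∑ w : Fin n → Fin k, (∏ j, (b (w j) : ENNReal)) • Measure.dirac (wordPt finv a w)

/-- Weak convergence of a sequence of Borel measures. -/
def WeakTendsto (ρ : ℕ → Measure (OnePoint ℂ)) (μ : Measure (OnePoint ℂ)) : Prop :=
  ∀ φ : OnePoint ℂ → ℝ, Continuous φ →
    Tendsto (fun n => ∫ x, φ x ∂(ρ n)) atTop (𝓝 (∫ x, φ x ∂μ))

/-- `ρ` is invariant under the adjoint `T_b^*` of the transition operator
`(Tφ)(z) = ∑_j b_j φ(f_j⁻¹ z)`, i.e. `∫ Tφ dρ = ∫ φ dρ` for all continuous `φ`. -/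
def TStarInvariant {k : ℕ} (finv : Fin k → OnePoint ℂ → OnePoint ℂ) (b : Fin k → NNReal)
    (ρ : Measure (OnePoint ℂ)) : Prop :=
  ∀ φ : OnePoint ℂ → ℝ, Continuous φ →
    ∫ z, (∑ j, (b j : ℝ) * φ (finv j z)) ∂ρ = ∫ z, φ z ∂ρ

/-- The (topological) support of a Borel measure: the smallest closed set of full
measure, i.e. the set of points all of whose open neighborhoods have positive measure. -/
def measSupport (μ : Measure (OnePoint ℂ)) : Set (OnePoint ℂ) :=
  { x | ∀ U : Set (OnePoint ℂ), IsOpen U → x ∈ U → 0 < μ U }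

/-- `P` is the Bernoulli product measure `P_b` on `Σ_k^+ = ∏_{n=1}^∞ {1,…,k}`. -/
def IsBernoulli {k : ℕ} (b : Fin k → NNReal) (P : Measure (ℕ → Fin k)) : Prop :=
  IsProbabilityMeasure P ∧ ∀ (m : ℕ) (j : Fin m → Fin k),
    P { ω | ∀ i : Fin m, ω i = j i } = ∏ i, (b (j i) : ENNReal)

/-- A minimal set of `G`: a nonempty compact set `L` with
`closure {g z : g ∈ G} = L` for every `z ∈ L`. -/
def IsMinimalSet (G : Set (OnePoint ℂ → OnePoint ℂ)) (L : Set (OnePoint ℂ)) : Prop :=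
  L.Nonempty ∧ IsCompact L ∧ ∀ z ∈ L, closure { w | ∃ g ∈ G, g z = w } = L

/-- `z₀` is an attracting fixed point of `g`: `g z₀ = z₀` and the iterates `g^n`
converge uniformly to the constant `z₀` on some open neighborhood of `z₀`. -/
def IsAttractingFixedPt (g : OnePoint ℂ → OnePoint ℂ) (z₀ : OnePoint ℂ) : Prop :=
  letI : UniformSpace (OnePoint ℂ) := uniformSpaceOfCompactR1
  g z₀ = z₀ ∧ ∃ U : Set (OnePoint ℂ), IsOpen U ∧ z₀ ∈ U ∧
    TendstoUniformlyOn (fun n => g^[n]) (fun _ => z₀) atTop U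
/-- The empirical measure `μ^a_{i₁,…,i_n} = (1/n) ∑_{j=1}^n δ_{z_{i₁,…,i_j}}`. -/
def empMeas {k : ℕ} (finv : Fin k → OnePoint ℂ → OnePoint ℂ) (a : OnePoint ℂ)
    (ω : ℕ → Fin k) (n : ℕ) : Measure (OnePoint ℂ) :=
  (n : ENNReal)⁻¹ • ∑ j ∈ Finset.range n, Measure.dirac (bwdPt finv a ω (j + 1))


section Helpers

lemma foldr_comp {k : ℕ} (f : Fin k → OnePoint ℂ → OnePoint ℂ) (l : List (Fin k))
    (c : OnePoint ℂ → OnePoint ℂ) :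
    l.foldr (fun i h => f i ∘ h) c = (l.foldr (fun i h => f i ∘ h) id) ∘ c := by
  induction l with
  | nil => rfl
  | cons i l ih => ext x; simp [ih]

lemma comp_gen_mem {k : ℕ} (f : Fin k → OnePoint ℂ → OnePoint ℂ)
    {g : OnePoint ℂ → OnePoint ℂ} (hg : g ∈ genSemigroup f) (j : Fin k) :
    g ∘ f j ∈ genSemigroup f := by
  obtain ⟨l, hl, rfl⟩ := hg
  refine ⟨l ++ [j], by simp, ?_⟩
  rw [List.foldr_append]
  simp only [List.foldr_cons, List.foldr_nil, Function.comp_id]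
  rw [foldr_comp f l (f j)]

lemma fatou_isOpen (G : Set (OnePoint ℂ → OnePoint ℂ)) : IsOpen (fatouSet G) := by
  rw [isOpen_iff_mem_nhds]
  rintro z ⟨U, hUo, hzU, hequi⟩
  exact Filter.mem_of_superset (hUo.mem_nhds hzU) fun u hu => ⟨U, hUo, hu, hequi⟩

lemma julia_isClosed (G : Set (OnePoint ℂ → OnePoint ℂ)) : IsClosed (juliaSet G) :=
  (fatou_isOpen G).isClosed_compl

lemma fatou_fwd {k : ℕ} (f : Fin k → OnePoint ℂ → OnePoint ℂ)
    (hmob : ∀ j, IsMobius (f j)) (j : Fin k) {w : OnePoint ℂ}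
    (hw : w ∈ fatouSet (genSemigroup f)) : f j w ∈ fatouSet (genSemigroup f) := by
  letI : UniformSpace (OnePoint ℂ) := uniformSpaceOfCompactR1
  obtain ⟨e, he⟩ := isHomeomorph_iff_exists_homeomorph.mp (hmob j).1
  obtain ⟨U, hUo, hwU, hequi⟩ := hw
  refine ⟨e '' U, e.isOpenMap U hUo, ⟨w, hwU, by rw [he]⟩, ?_⟩
  rintro y ⟨x, hxU, rfl⟩
  intro V hV
  have h1 := hequi x hxU V hV
  rw [← e.isEmbedding.map_nhdsWithin_eq U x, Filter.eventually_map]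
  filter_upwards [h1] with x' hx' g
  have := hx' ⟨(g : OnePoint ℂ → OnePoint ℂ) ∘ f j, comp_gen_mem f g.2 j⟩
  simpa [Function.comp, he] using this

lemma orbit_mem_julia {k : ℕ} (f finv : Fin k → OnePoint ℂ → OnePoint ℂ)
    (hmob : ∀ j, IsMobius (f j))
    (hinv : ∀ j, Function.LeftInverse (finv j) (f j) ∧ Function.RightInverse (finv j) (f j))
    (a : OnePoint ℂ) (ω : ℕ → Fin k)
    (ha : a ∈ juliaSet (genSemigroup f)) :
    ∀ n, bwdPt finv a ω n ∈ juliaSet (genSemigroup f) := by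
  intro n
  induction n with
  | zero => exact ha
  | succ n ih =>
    intro hF
    apply ih
    have := fatou_fwd f hmob (ω n) hF
    rwa [show f (ω n) (bwdPt finv a ω (n + 1)) = bwdPt finv a ω n from
      (hinv (ω n)).2 (bwdPt finv a ω n)] at this

end Helpers

/-- **Corollary (Closure of a random backward orbit contains/equals the Julia set).** -/
theorem closure_backward_orbit {k : ℕ} (f finv : Fin k → OnePoint ℂ → OnePoint ℂ)
    (hmob : ∀ j, IsMobius (f j))
    (hinv : ∀ j, Function.LeftInverse (finv j) (f j) ∧ Function.RightInverse (finv j) (f j))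
    (hker : kernelJulia (genSemigroup finv) = ∅)
    (hJ : juliaSet (genSemigroup finv) ≠ ∅)
    (a : OnePoint ℂ) (ω : ℕ → Fin k) (μ : Measure (OnePoint ℂ))
    (hμ : IsProbabilityMeasure μ)
    (hsupp : measSupport μ = juliaSet (genSemigroup f))
    (hconv : WeakTendsto (fun n => empMeas finv a ω n) μ) :
    juliaSet (genSemigroup f) ⊆ closure (⋃ j : ℕ, {bwdPt finv a ω j}) ∧
    (a ∈ juliaSet (genSemigroup f) →
      juliaSet (genSemigroup f) = closure (⋃ j : ℕ, {bwdPt finv a ω j})) := by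
  have hpart1 : juliaSet (genSemigroup f) ⊆ closure (⋃ j : ℕ, {bwdPt finv a ω j}) := by
    intro x hx
    by_contra hxC
    obtain ⟨φ, hφ0, hφ1, hφmem⟩ :=
      exists_continuous_zero_one_of_isClosed isClosed_closure isClosed_singleton
        (Set.disjoint_singleton_right.mpr hxC)
    have hpt : ∀ m : ℕ, φ (bwdPt finv a ω m) = 0 := fun m =>
      hφ0 (subset_closure (Set.mem_iUnion.mpr ⟨m, rfl⟩))
    have hint : ∀ (μ' : Measure (OnePoint ℂ)) [IsFiniteMeasure μ'],
        Integrable (fun z => φ z) μ' := fun μ' _ =>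
      φ.continuous.integrable_of_hasCompactSupport (HasCompactSupport.of_compactSpace _)
    have hzero : ∀ n, ∫ z, φ z ∂(empMeas finv a ω n) = 0 := by
      intro n
      unfold empMeas
      rw [integral_smul_measure, integral_finset_sum_measure (fun i _ => hint _)]
      have : ∀ j ∈ Finset.range n,
          ∫ z, φ z ∂(Measure.dirac (bwdPt finv a ω (j + 1))) = 0 := by
        intro j _
        rw [integral_dirac' _ _ φ.continuous.stronglyMeasurable, hpt]
      rw [Finset.sum_congr rfl this]
      simp
    have hlim := hconv φ φ.continuous
    simp only [hzero] at hlim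
    have hμ0 : ∫ z, φ z ∂μ = 0 := (tendsto_nhds_unique tendsto_const_nhds hlim).symm ▸ rfl
    have hae : (fun z => φ z) =ᵐ[μ] 0 :=
      (integral_eq_zero_iff_of_nonneg (fun z => (hφmem z).1) (hint μ)).mp hμ0
    have hne : μ {z | φ z ≠ 0} = 0 := hae
    have hxsupp : x ∈ measSupport μ := hsupp.symm ▸ hx
    have hU : 0 < μ (φ ⁻¹' Set.Ioi 0) := by
      apply hxsupp
      · exact (isOpen_Ioi).preimage φ.continuous
      · have : φ x = 1 := hφ1 rfl
        simp [Set.mem_preimage, this]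
    have : μ (φ ⁻¹' Set.Ioi 0) ≤ μ {z | φ z ≠ 0} :=
      measure_mono fun z hz => ne_of_gt hz
    exact hU.not_ge (hne ▸ this)
  refine ⟨hpart1, fun ha => Set.Subset.antisymm hpart1 ?_⟩
  exact closure_minimal
    (Set.iUnion_subset fun j => Set.singleton_subset_iff.mpr
      (orbit_mem_julia f finv hmob hinv a ω ha j))
    (julia_isClosed _)
end
end

section
/- For each β ∈ ℂ \ {0}, let f(z) = β + 1/z and g(z) = −β + 1/z (extended as Möbius maps of ℂ̂), and let S_β = ⟨f, g⟩ and S_β' = ⟨f⁻¹, g⁻¹⟩. Then exactly one of the following holds: (i) J(S_β) ≠ J(S_β') and J_ker(S_β) = ∅ = J_ker(S_β'); or (ii) J(S_β) = J(S_β') and J_ker(S_β) = J(S_β) = J(S_β') = J_ker(S_β'). -/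
open MeasureTheory Topology Filter Set

noncomputable section

namespace Caruso


/-- Stereographic embedding of the Riemann sphere into `ℝ³`. -/
def Phi : OnePoint ℂ → EuclideanSpace ℝ (Fin 3) :=
  OnePoint.rec (WithLp.toLp 2 (![0, 0, 1] : Fin 3 → ℝ))
    (fun z => WithLp.toLp 2 (![2 * z.re / (1 + ‖z‖ ^ 2), 2 * z.im / (1 + ‖z‖ ^ 2),
      (‖z‖ ^ 2 - 1) / (1 + ‖z‖ ^ 2)] : Fin 3 → ℝ))

/-- The chordal metric on the Riemann sphere. -/
def d (z w : OnePoint ℂ) : ℝ := dist (Phi z) (Phi w)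

@[simp] lemma phi_infty : Phi OnePoint.infty = WithLp.toLp 2 (![0,0,1] : Fin 3 → ℝ) := rfl
@[simp] lemma phi_coe (z : ℂ) : Phi (z : OnePoint ℂ) =
    WithLp.toLp 2 (![2 * z.re / (1 + ‖z‖ ^ 2), 2 * z.im / (1 + ‖z‖ ^ 2),
      (‖z‖ ^ 2 - 1) / (1 + ‖z‖ ^ 2)] : Fin 3 → ℝ) := rfl

lemma normsq (z : ℂ) : ‖z‖ ^ 2 = z.re ^ 2 + z.im ^ 2 := by
  rw [Complex.sq_norm, Complex.normSq_apply]; ring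

lemma one_add_normsq_pos (z : ℂ) : 0 < 1 + ‖z‖ ^ 2 := by positivity

lemma d_nonneg (z w : OnePoint ℂ) : 0 ≤ d z w := dist_nonneg
lemma d_symm (z w : OnePoint ℂ) : d z w = d w z := dist_comm _ _
lemma d_triangle (x y z : OnePoint ℂ) : d x z ≤ d x y + d y z := dist_triangle _ _ _
@[simp] lemma d_self (z : OnePoint ℂ) : d z z = 0 := dist_self _

lemma dist_sq_eq (a b : EuclideanSpace ℝ (Fin 3)) :
    dist a b ^ 2 = (a 0 - b 0) ^ 2 + (a 1 - b 1) ^ 2 + (a 2 - b 2) ^ 2 := by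
  rw [EuclideanSpace.dist_eq, Real.sq_sqrt (by positivity)]
  rw [Fin.sum_univ_three]
  simp [Real.dist_eq, sq_abs]

lemma dsq_coe_coe (z w : ℂ) :
    d (z : OnePoint ℂ) (w : OnePoint ℂ) ^ 2
      = 4 * ‖z - w‖ ^ 2 / ((1 + ‖z‖ ^ 2) * (1 + ‖w‖ ^ 2)) := by
  have hz := (one_add_normsq_pos z).ne'
  have hw := (one_add_normsq_pos w).ne'
  rw [d, dist_sq_eq]
  simp only [phi_coe, PiLp.toLp_apply, Matrix.cons_val_zero, Matrix.cons_val_one, Matrix.head_cons,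
    Matrix.cons_val_two, Matrix.tail_cons]
  rw [normsq z, normsq w, normsq (z - w)] at *
  simp only [Complex.sub_re, Complex.sub_im]
  field_simp
  ring

lemma dsq_coe_infty (z : ℂ) :
    d (z : OnePoint ℂ) OnePoint.infty ^ 2 = 4 / (1 + ‖z‖ ^ 2) := by
  have hz := (one_add_normsq_pos z).ne'
  rw [d, dist_sq_eq]
  simp only [phi_coe, phi_infty, PiLp.toLp_apply, Matrix.cons_val_zero, Matrix.cons_val_one, Matrix.head_cons,
    Matrix.cons_val_two, Matrix.tail_cons]
  rw [normsq z] at *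
  field_simp
  ring

@[simp] lemma d_infty_infty : d OnePoint.infty OnePoint.infty = 0 := dist_self _

-- norm of Phi = 1
lemma norm_phi (z : OnePoint ℂ) : ‖Phi z‖ = 1 := by
  have h : ‖Phi z‖ ^ 2 = 1 := by
    induction z using OnePoint.rec with
    | infty =>
        rw [EuclideanSpace.norm_eq, Real.sq_sqrt (by positivity), Fin.sum_univ_three]
        norm_num [phi_infty, PiLp.toLp_apply, Matrix.cons_val_two, Matrix.tail_cons, Matrix.head_cons]
    | coe z =>
        have hz := (one_add_normsq_pos z).ne'
        rw [EuclideanSpace.norm_eq, Real.sq_sqrt (by positivity), Fin.sum_univ_three]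
        simp only [phi_coe, PiLp.toLp_apply, Matrix.cons_val_zero, Matrix.cons_val_one, Matrix.head_cons,
          Matrix.cons_val_two, Matrix.tail_cons, Real.norm_eq_abs, sq_abs]
        rw [normsq z] at *
        field_simp
        ring
  nlinarith [norm_nonneg (Phi z)]

lemma d_le_two (z w : OnePoint ℂ) : d z w ≤ 2 := by
  have h := dist_le_norm_add_norm (Phi z) (Phi w)
  rw [norm_phi, norm_phi] at h
  show dist (Phi z) (Phi w) ≤ 2
  linarith

lemma d_eq_zero_iff {z w : OnePoint ℂ} : d z w = 0 ↔ z = w := by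
  constructor
  · intro h
    induction z using OnePoint.rec with
    | infty =>
        induction w using OnePoint.rec with
        | infty => rfl
        | coe w =>
            exfalso
            have h2 : d (OnePoint.infty) (w : OnePoint ℂ) ^ 2 = 4 / (1 + ‖w‖ ^ 2) := by
              rw [d_symm]; exact dsq_coe_infty w
            have hpos : (0:ℝ) < 4 / (1 + ‖w‖ ^ 2) := by positivity
            rw [← h2, h] at hpos
            norm_num at hpos
    | coe z =>
        induction w using OnePoint.rec with
        | infty =>
            exfalso
            have h2 := dsq_coe_infty z
            have hpos : (0:ℝ) < 4 / (1 + ‖z‖ ^ 2) := by positivity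
            rw [← h2, h] at hpos
            norm_num at hpos
        | coe w =>
            have h2 := dsq_coe_coe z w
            have hz := one_add_normsq_pos z
            have hw := one_add_normsq_pos w
            have h4 : 4 * ‖z - w‖ ^ 2 / ((1 + ‖z‖ ^ 2) * (1 + ‖w‖ ^ 2)) = 0 := by
              rw [← h2, h]; norm_num
            rcases div_eq_zero_iff.mp h4 with h5 | h5
            · have h6 : ‖z - w‖ = 0 := by nlinarith [norm_nonneg (z - w)]
              have h7 : z = w := by rwa [norm_eq_zero, sub_eq_zero] at h6
              exact congrArg _ h7
            · nlinarith
  · rintro rfl; exact d_self z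

lemma phi_injective : Function.Injective Phi := by
  intro z w h
  exact d_eq_zero_iff.mp (by rw [d, h, dist_self])

lemma d_pos {z w : OnePoint ℂ} (h : z ≠ w) : 0 < d z w :=
  lt_of_le_of_ne (d_nonneg z w) (fun h0 => h (d_eq_zero_iff.mp h0.symm))

lemma continuous_phi : Continuous Phi := by
  rw [OnePoint.continuous_iff]
  constructor
  · rw [Filter.coclosedCompact_eq_cocompact]
    rw [tendsto_iff_dist_tendsto_zero]
    have hbound : ∀ᶠ z : ℂ in cocompact ℂ,
        dist (Phi (z : OnePoint ℂ)) (Phi OnePoint.infty) ≤ 2 / ‖z‖ := by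
      filter_upwards [tendsto_norm_cocompact_atTop.eventually_ge_atTop 1] with z hz
      have h0 : (0:ℝ) < ‖z‖ := lt_of_lt_of_le one_pos hz
      have h1 : dist (Phi (z : OnePoint ℂ)) (Phi OnePoint.infty) ^ 2 ≤ (2 / ‖z‖) ^ 2 := by
        have hd := dsq_coe_infty z
        rw [d] at hd
        rw [hd, div_pow]
        have h2 : ‖z‖ ^ 2 ≤ 1 + ‖z‖ ^ 2 := by linarith
        calc 4 / (1 + ‖z‖^2) ≤ 4 / ‖z‖^2 := by
              apply div_le_div_of_nonneg_left (by norm_num) (by positivity) h2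
          _ = 2^2 / ‖z‖^2 := by norm_num
      have h3 : (0:ℝ) ≤ 2/‖z‖ := by positivity
      nlinarith [dist_nonneg (x := Phi (z : OnePoint ℂ)) (y := Phi OnePoint.infty)]
    exact squeeze_zero' (Eventually.of_forall (fun z => dist_nonneg)) hbound
      (tendsto_const_nhds.div_atTop tendsto_norm_cocompact_atTop)
  · have hc : Continuous fun z : ℂ => (![2 * z.re / (1 + ‖z‖ ^ 2), 2 * z.im / (1 + ‖z‖ ^ 2),
        (‖z‖ ^ 2 - 1) / (1 + ‖z‖ ^ 2)] : Fin 3 → ℝ) := by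
      apply continuous_pi
      intro i
      have hden : Continuous fun z : ℂ => 1 + ‖z‖ ^ 2 := by fun_prop
      have hne : ∀ z : ℂ, 1 + ‖z‖ ^ 2 ≠ 0 := fun z => (one_add_normsq_pos z).ne'
      fin_cases i
      · exact Continuous.div (by fun_prop) hden hne
      · exact Continuous.div (by fun_prop) hden hne
      · exact Continuous.div (by fun_prop) hden hne
    exact (EuclideanSpace.equiv (Fin 3) ℝ).symm.continuous.comp hc




/-- The chordal metric space structure. -/
def m : MetricSpace (OnePoint ℂ) := MetricSpace.induced Phi phi_injective inferInstance

lemma m_topology_eq :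
    m.toUniformSpace.toTopologicalSpace = (inferInstance : TopologicalSpace (OnePoint ℂ)) := by
  have hemb : IsClosedEmbedding Phi := continuous_phi.isClosedEmbedding phi_injective
  have h1 : m.toUniformSpace.toTopologicalSpace
      = TopologicalSpace.induced Phi inferInstance := rfl
  rw [h1, ← hemb.isInducing.eq_induced]

lemma uniformity_eq :
    (uniformSpaceOfCompactR1 : UniformSpace (OnePoint ℂ)) = m.toUniformSpace :=
  unique_uniformity_of_compact rfl m_topology_eq

lemma uniformity_basis :
    (@uniformity (OnePoint ℂ) uniformSpaceOfCompactR1).HasBasis (fun ε : ℝ => 0 < ε)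
      (fun ε => { p : OnePoint ℂ × OnePoint ℂ | d p.1 p.2 < ε }) := by
  have h : (@uniformity (OnePoint ℂ) uniformSpaceOfCompactR1)
      = @uniformity (OnePoint ℂ) m.toUniformSpace := by rw [uniformity_eq]
  rw [h]
  exact @Metric.uniformity_basis_dist (OnePoint ℂ) m.toPseudoMetricSpace

lemma nhds_basis (x : OnePoint ℂ) :
    (𝓝 x).HasBasis (fun ε : ℝ => 0 < ε) (fun ε => { y | d x y < ε }) := by
  have h := @Metric.nhds_basis_ball (OnePoint ℂ) m.toPseudoMetricSpace x
  have ht : (𝓝 x : Filter (OnePoint ℂ))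
      = @nhds (OnePoint ℂ) m.toUniformSpace.toTopologicalSpace x := by
    rw [m_topology_eq]
  rw [ht]
  convert h using 2 with ε
  ext y
  show d x y < ε ↔ y ∈ @Metric.ball _ m.toPseudoMetricSpace x ε
  rw [@Metric.mem_ball (OnePoint ℂ) m.toPseudoMetricSpace]
  show d x y < ε ↔ d y x < ε
  rw [d_symm]



lemma mem_fatou_unfold {G : Set (OnePoint ℂ → OnePoint ℂ)} {z : OnePoint ℂ} :
    z ∈ fatouSet G ↔ ∃ U : Set (OnePoint ℂ), IsOpen U ∧ z ∈ U ∧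
      @EquicontinuousOn _ _ _ _ uniformSpaceOfCompactR1
        (fun g : G => (g : OnePoint ℂ → OnePoint ℂ)) U := Iff.rfl

/-- Metric characterization of the Fatou set. -/
lemma mem_fatou_iff {G : Set (OnePoint ℂ → OnePoint ℂ)} {z : OnePoint ℂ} :
    z ∈ fatouSet G ↔ ∃ U : Set (OnePoint ℂ), IsOpen U ∧ z ∈ U ∧
      ∀ x ∈ U, ∀ ε > 0, ∃ δ > 0, ∀ y ∈ U, d x y < δ →
        ∀ u ∈ G, d (u x) (u y) < ε := by
  rw [mem_fatou_unfold]
  refine exists_congr fun U => and_congr_right fun _ => and_congr_right fun _ => ?_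
  unfold EquicontinuousOn
  refine forall₂_congr fun x hx => ?_
  unfold EquicontinuousWithinAt
  constructor
  · intro h ε hε
    have h2 := h _ (uniformity_basis.mem_of_mem hε)
    rw [(nhdsWithin_hasBasis (nhds_basis x) U).eventually_iff] at h2
    obtain ⟨δ, hδ, h3⟩ := h2
    exact ⟨δ, hδ, fun y hyU hyd => fun u hu => h3 ⟨hyd, hyU⟩ ⟨u, hu⟩⟩
  · intro h V hV
    obtain ⟨ε, hε, hsub⟩ := uniformity_basis.mem_iff.mp hV
    obtain ⟨δ, hδ, h3⟩ := h ε hε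
    rw [(nhdsWithin_hasBasis (nhds_basis x) U).eventually_iff]
    exact ⟨δ, hδ, fun y hy i => hsub (h3 y hy.2 hy.1 i.1 i.2)⟩



lemma subset_fatou {G : Set (OnePoint ℂ → OnePoint ℂ)} {U : Set (OnePoint ℂ)}
    (hU : IsOpen U)
    (h : ∀ x ∈ U, ∀ ε > 0, ∃ δ > 0, ∀ y ∈ U, d x y < δ → ∀ u ∈ G, d (u x) (u y) < ε) :
    U ⊆ fatouSet G := fun z hz => mem_fatou_iff.mpr ⟨U, hU, hz, h⟩

lemma isOpen_fatou (G : Set (OnePoint ℂ → OnePoint ℂ)) : IsOpen (fatouSet G) := by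
  rw [isOpen_iff_forall_mem_open]
  intro z hz
  obtain ⟨U, hU, hzU, h⟩ := mem_fatou_iff.mp hz
  exact ⟨U, subset_fatou hU h, hU, hzU⟩

lemma isClosed_julia (G : Set (OnePoint ℂ → OnePoint ℂ)) : IsClosed (juliaSet G) :=
  (isOpen_fatou G).isClosed_compl

/-- If every d-ball around `c` meets the Julia set, then `c` is in the Julia set. -/
lemma mem_julia_of_approx {G : Set (OnePoint ℂ → OnePoint ℂ)} {c : OnePoint ℂ}
    (h : ∀ t > 0, ∃ j ∈ juliaSet G, d c j < t) : c ∈ juliaSet G := by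
  by_contra hc
  have hc' : c ∈ fatouSet G := not_not.mp hc
  have hopen := isOpen_fatou G
  obtain ⟨t, ht, hsub⟩ := (nhds_basis c).mem_iff.mp (hopen.mem_nhds hc')
  obtain ⟨j, hj, hjd⟩ := h t ht
  exact hj (hsub hjd)

/-- Openness in terms of d-balls. -/
lemma exists_ball_subset {U : Set (OnePoint ℂ)} (hU : IsOpen U) {x : OnePoint ℂ} (hx : x ∈ U) :
    ∃ δ > 0, ∀ y, d x y < δ → y ∈ U := by
  obtain ⟨δ, hδ, hsub⟩ := (nhds_basis x).mem_iff.mp (hU.mem_nhds hx)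
  exact ⟨δ, hδ, fun y hy => hsub hy⟩


lemma isOpen_ball (x : OnePoint ℂ) (ε : ℝ) : IsOpen { y | d x y < ε } := by
  rw [isOpen_iff_mem_nhds]
  intro y hy
  rw [(nhds_basis y).mem_iff]
  refine ⟨ε - d x y, sub_pos.mpr hy, fun z hz => ?_⟩
  have h1 := d_triangle x y z
  simp only [mem_setOf_eq] at *
  linarith


lemma eq_of_sq_eq {a b : ℝ} (ha : 0 ≤ a) (hb : 0 ≤ b) (h : a ^ 2 = b ^ 2) : a = b := by
  nlinarith

/-- A "multiplier map": distorts the chordal metric by a product of pointwise factors. -/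
def IsMult (u : OnePoint ℂ → OnePoint ℂ) : Prop :=
  ∃ k : OnePoint ℂ → ℝ, (∀ z, 0 < k z) ∧ ∀ z w, d (u z) (u w) = k z * k w * d z w

lemma isMult_id : IsMult id :=
  ⟨fun _ => 1, fun _ => one_pos, fun z w => by simp⟩

lemma IsMult.comp {u v : OnePoint ℂ → OnePoint ℂ} (hu : IsMult u) (hv : IsMult v) :
    IsMult (u ∘ v) := by
  obtain ⟨k, hk, hku⟩ := hu
  obtain ⟨l, hl, hlv⟩ := hv
  refine ⟨fun z => k (v z) * l z, fun z => mul_pos (hk _) (hl _), fun z w => ?_⟩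
  simp only [Function.comp_apply]
  rw [hku, hlv]; ring

lemma IsMult.of_inverse {u u' : OnePoint ℂ → OnePoint ℂ} (hu : IsMult u)
    (h1 : ∀ z, u (u' z) = z) : IsMult u' := by
  obtain ⟨k, hk, hku⟩ := hu
  refine ⟨fun z => (k (u' z))⁻¹, fun z => inv_pos.mpr (hk _), fun z w => ?_⟩
  have h2 := hku (u' z) (u' w)
  rw [h1, h1] at h2
  have hne1 : k (u' z) ≠ 0 := (hk _).ne'
  have hne2 : k (u' w) ≠ 0 := (hk _).ne'
  rw [h2]
  field_simp

/-! ### concrete maps -/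

def Tr (γ : ℂ) : OnePoint ℂ → OnePoint ℂ :=
  OnePoint.rec OnePoint.infty (fun z => ((z + γ : ℂ) : OnePoint ℂ))

def Inv : OnePoint ℂ → OnePoint ℂ :=
  OnePoint.rec ((0 : ℂ) : OnePoint ℂ)
    (fun z => if z = 0 then OnePoint.infty else ((z⁻¹ : ℂ) : OnePoint ℂ))

def Neg : OnePoint ℂ → OnePoint ℂ :=
  OnePoint.rec OnePoint.infty (fun z => ((-z : ℂ) : OnePoint ℂ))

@[simp] lemma Tr_infty (γ : ℂ) : Tr γ OnePoint.infty = OnePoint.infty := rfl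
@[simp] lemma Tr_coe (γ z : ℂ) : Tr γ (z : OnePoint ℂ) = ((z + γ : ℂ) : OnePoint ℂ) := rfl
@[simp] lemma Inv_infty : Inv OnePoint.infty = ((0 : ℂ) : OnePoint ℂ) := rfl
@[simp] lemma Inv_zero : Inv ((0 : ℂ) : OnePoint ℂ) = OnePoint.infty := by
  show (if (0:ℂ) = 0 then OnePoint.infty else _) = OnePoint.infty
  simp
@[simp] lemma Inv_coe (z : ℂ) (hz : z ≠ 0) : Inv (z : OnePoint ℂ) = ((z⁻¹ : ℂ) : OnePoint ℂ) := by
  show (if z = 0 then OnePoint.infty else ((z⁻¹ : ℂ) : OnePoint ℂ)) = _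
  simp [hz]
@[simp] lemma Neg_infty : Neg OnePoint.infty = OnePoint.infty := rfl
@[simp] lemma Neg_coe (z : ℂ) : Neg (z : OnePoint ℂ) = ((-z : ℂ) : OnePoint ℂ) := rfl

lemma isometry_neg (z w : OnePoint ℂ) : d (Neg z) (Neg w) = d z w := by
  induction z using OnePoint.rec with
  | infty =>
      induction w using OnePoint.rec with
      | infty => rfl
      | coe w =>
          apply eq_of_sq_eq (d_nonneg _ _) (d_nonneg _ _)
          rw [Neg_infty, Neg_coe, d_symm, d_symm OnePoint.infty, dsq_coe_infty, dsq_coe_infty]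
          simp
  | coe z =>
      induction w using OnePoint.rec with
      | infty =>
          apply eq_of_sq_eq (d_nonneg _ _) (d_nonneg _ _)
          rw [Neg_infty, Neg_coe, dsq_coe_infty, dsq_coe_infty]
          simp
      | coe w =>
          apply eq_of_sq_eq (d_nonneg _ _) (d_nonneg _ _)
          rw [Neg_coe, Neg_coe, dsq_coe_coe, dsq_coe_coe]
          have h1 : -z - -w = -(z - w) := by ring
          rw [h1]
          simp only [norm_neg]

lemma isometry_inv (z w : OnePoint ℂ) : d (Inv z) (Inv w) = d z w := by
  have key : ∀ a b : ℂ, a ≠ 0 → b ≠ 0 →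
      d ((a⁻¹ : ℂ) : OnePoint ℂ) ((b⁻¹ : ℂ) : OnePoint ℂ) = d (a : OnePoint ℂ) (b : OnePoint ℂ) := by
    intro a b ha hb
    apply eq_of_sq_eq (d_nonneg _ _) (d_nonneg _ _)
    rw [dsq_coe_coe, dsq_coe_coe]
    have h1 : a⁻¹ - b⁻¹ = (b - a) / (a * b) := by field_simp
    rw [h1, norm_div, norm_mul, norm_inv, norm_inv, div_pow, mul_pow]
    have ha' : (0:ℝ) < ‖a‖ := norm_pos_iff.mpr ha
    have hb' : (0:ℝ) < ‖b‖ := norm_pos_iff.mpr hb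
    have ha0 : ‖a‖ ≠ 0 := ha'.ne'
    have hb0 : ‖b‖ ≠ 0 := hb'.ne'
    have hA : ‖a‖ ≠ 0 := ha0
    have hB : ‖b‖ ≠ 0 := hb0
    have h2 : ‖b - a‖ = ‖a - b‖ := norm_sub_rev b a
    rw [h2]
    field_simp
    ring
  have zeroinf : ∀ b : ℂ, b ≠ 0 →
      d OnePoint.infty ((b⁻¹ : ℂ) : OnePoint ℂ) = d ((0:ℂ) : OnePoint ℂ) (b : OnePoint ℂ) := by
    intro b hb
    apply eq_of_sq_eq (d_nonneg _ _) (d_nonneg _ _)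
    rw [d_symm OnePoint.infty ((b⁻¹:ℂ) : OnePoint ℂ), dsq_coe_infty, dsq_coe_coe]
    have hb' : (0:ℝ) < ‖b‖ := norm_pos_iff.mpr hb
    have hb0 : ‖b‖ ≠ 0 := hb'.ne'
    have hB : ‖b‖ ≠ 0 := hb0
    rw [norm_inv]
    simp only [zero_sub, norm_neg, norm_zero]
    field_simp
    ring
  have infcoe : ∀ b : ℂ, b ≠ 0 →
      d ((0:ℂ) : OnePoint ℂ) ((b⁻¹ : ℂ) : OnePoint ℂ) = d OnePoint.infty (b : OnePoint ℂ) := by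
    intro b hb
    apply eq_of_sq_eq (d_nonneg _ _) (d_nonneg _ _)
    rw [dsq_coe_coe, d_symm OnePoint.infty (b : OnePoint ℂ), dsq_coe_infty]
    have hb' : (0:ℝ) < ‖b‖ := norm_pos_iff.mpr hb
    have hb0 : ‖b‖ ≠ 0 := hb'.ne'
    have hB : ‖b‖ ≠ 0 := hb0
    rw [norm_inv]
    simp only [zero_sub, norm_neg, norm_zero, norm_inv]
    field_simp
    ring
  induction z using OnePoint.rec with
  | infty =>
      induction w using OnePoint.rec with
      | infty => rw [Inv_infty, d_self, d_self]
      | coe w =>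
          by_cases hw : w = 0
          · subst hw
            rw [Inv_infty, Inv_zero]
            exact d_symm _ _
          · rw [Inv_infty, Inv_coe w hw, infcoe w hw]
  | coe z =>
      induction w using OnePoint.rec with
      | infty =>
          by_cases hz : z = 0
          · subst hz
            rw [Inv_zero, Inv_infty]
            exact d_symm _ _
          · rw [Inv_coe z hz, Inv_infty, d_symm ((z⁻¹:ℂ) : OnePoint ℂ) ((0:ℂ) : OnePoint ℂ),
              infcoe z hz]
            exact d_symm _ _
      | coe w =>
          by_cases hz : z = 0
          · subst hz
            by_cases hw : w = 0
            · subst hw; rw [Inv_zero, d_self, d_self]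
            · rw [Inv_zero, Inv_coe w hw, zeroinf w hw]
          · by_cases hw : w = 0
            · subst hw
              rw [Inv_coe z hz, Inv_zero,
                d_symm ((z⁻¹:ℂ) : OnePoint ℂ) OnePoint.infty, zeroinf z hz]
              exact d_symm _ _
            · rw [Inv_coe z hz, Inv_coe w hw, key z w hz hw]

/-- multiplier for the translation. -/
def kTr (γ : ℂ) : OnePoint ℂ → ℝ :=
  OnePoint.rec 1 (fun z => Real.sqrt ((1 + ‖z‖ ^ 2) / (1 + ‖z + γ‖ ^ 2)))

lemma kTr_pos (γ : ℂ) (z : OnePoint ℂ) : 0 < kTr γ z := by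
  induction z using OnePoint.rec with
  | infty => exact one_pos
  | coe z =>
      apply Real.sqrt_pos.mpr
      have := one_add_normsq_pos z
      have := one_add_normsq_pos (z + γ)
      positivity

lemma kTr_sq (γ : ℂ) (z : ℂ) :
    kTr γ (z : OnePoint ℂ) ^ 2 = (1 + ‖z‖ ^ 2) / (1 + ‖z + γ‖ ^ 2) := by
  show Real.sqrt _ ^ 2 = _
  apply Real.sq_sqrt
  have := one_add_normsq_pos z
  have := one_add_normsq_pos (z + γ)
  positivity

lemma isMult_Tr (γ : ℂ) : IsMult (Tr γ) := by
  refine ⟨kTr γ, kTr_pos γ, fun z w => ?_⟩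
  apply eq_of_sq_eq (d_nonneg _ _)
    (mul_nonneg (mul_nonneg (kTr_pos γ z).le (kTr_pos γ w).le) (d_nonneg _ _))
  rw [mul_pow, mul_pow]
  induction z using OnePoint.rec with
  | infty =>
      induction w using OnePoint.rec with
      | infty => simp [Tr_infty, d_self]
      | coe w =>
          rw [Tr_infty, Tr_coe, d_symm, dsq_coe_infty, d_symm OnePoint.infty, dsq_coe_infty]
          show _ = (1:ℝ)^2 * kTr γ (w : OnePoint ℂ) ^2 * _
          rw [kTr_sq]
          have := (one_add_normsq_pos w).ne'
          have := (one_add_normsq_pos (w + γ)).ne'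
          field_simp
  | coe z =>
      induction w using OnePoint.rec with
      | infty =>
          rw [Tr_infty, Tr_coe, dsq_coe_infty, dsq_coe_infty]
          show _ = kTr γ (z : OnePoint ℂ)^2 * (1:ℝ)^2 * _
          rw [kTr_sq]
          have := (one_add_normsq_pos z).ne'
          have := (one_add_normsq_pos (z + γ)).ne'
          field_simp
      | coe w =>
          rw [Tr_coe, Tr_coe, dsq_coe_coe, dsq_coe_coe, kTr_sq, kTr_sq]
          have h1 : z + γ - (w + γ) = z - w := by ring
          rw [h1]
          have := (one_add_normsq_pos z).ne'
          have := (one_add_normsq_pos w).ne'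
          have := (one_add_normsq_pos (z + γ)).ne'
          have := (one_add_normsq_pos (w + γ)).ne'
          field_simp

lemma isMult_Inv : IsMult Inv :=
  ⟨fun _ => 1, fun _ => one_pos, fun z w => by rw [isometry_inv]; ring⟩

lemma isMult_Neg : IsMult Neg :=
  ⟨fun _ => 1, fun _ => one_pos, fun z w => by rw [isometry_neg]; ring⟩

/-- the symmetry z ↦ -1/z -/
def sig : OnePoint ℂ → OnePoint ℂ := Neg ∘ Inv

lemma isometry_sig (z w : OnePoint ℂ) : d (sig z) (sig w) = d z w := by
  show d (Neg (Inv z)) (Neg (Inv w)) = d z w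
  rw [isometry_neg, isometry_inv]

@[simp] lemma sig_infty : sig OnePoint.infty = ((0:ℂ) : OnePoint ℂ) := by
  show Neg (Inv OnePoint.infty) = _
  rw [Inv_infty, Neg_coe]; norm_num
@[simp] lemma sig_zero : sig ((0:ℂ) : OnePoint ℂ) = OnePoint.infty := by
  show Neg (Inv ((0:ℂ) : OnePoint ℂ)) = _
  rw [Inv_zero, Neg_infty]
@[simp] lemma sig_coe (z : ℂ) (hz : z ≠ 0) : sig (z : OnePoint ℂ) = ((-z⁻¹ : ℂ) : OnePoint ℂ) := by
  show Neg (Inv (z : OnePoint ℂ)) = _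
  rw [Inv_coe z hz, Neg_coe]

lemma sig_sig (z : OnePoint ℂ) : sig (sig z) = z := by
  induction z using OnePoint.rec with
  | infty => rw [sig_infty, sig_zero]
  | coe z =>
      by_cases hz : z = 0
      · subst hz; rw [sig_zero, sig_infty]
      · rw [sig_coe z hz, sig_coe _ (by simpa using inv_ne_zero hz)]
        congr 1
        field_simp



variable {k : ℕ} {F F' : Fin k → OnePoint ℂ → OnePoint ℂ}

lemma foldr_comp (F : Fin k → OnePoint ℂ → OnePoint ℂ) (l : List (Fin k))
    (c : OnePoint ℂ → OnePoint ℂ) :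
    l.foldr (fun i h => F i ∘ h) c = (l.foldr (fun i h => F i ∘ h) id) ∘ c := by
  induction l with
  | nil => rfl
  | cons a t ih => simp only [List.foldr_cons, ih]; rfl

lemma mem_gen_single (F : Fin k → OnePoint ℂ → OnePoint ℂ) (i : Fin k) :
    F i ∈ genSemigroup F :=
  ⟨[i], by simp, rfl⟩

lemma mem_gen_comp {u v : OnePoint ℂ → OnePoint ℂ} (hu : u ∈ genSemigroup F)
    (hv : v ∈ genSemigroup F) : u ∘ v ∈ genSemigroup F := by
  obtain ⟨l1, hl1, rfl⟩ := hu
  obtain ⟨l2, hl2, rfl⟩ := hv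
  refine ⟨l1 ++ l2, by simp [hl1], ?_⟩
  rw [List.foldr_append]
  exact (foldr_comp F l1 _).symm

lemma gen_induction (P : (OnePoint ℂ → OnePoint ℂ) → Prop) (hid : P id)
    (hcomp : ∀ i u, P u → P (F i ∘ u)) :
    ∀ u ∈ genSemigroup F, P u := by
  rintro u ⟨l, hl, rfl⟩
  clear hl
  induction l with
  | nil => exact hid
  | cons a t ih => exact hcomp a _ ih

/-- every word has an "inverse word" in the semigroup of the pointwise inverses. -/
lemma gen_inverse (hFF' : ∀ i, (∀ z, F i (F' i z) = z) ∧ (∀ z, F' i (F i z) = z)) :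
    ∀ u ∈ genSemigroup F, ∃ u' ∈ genSemigroup F',
      (∀ z, u (u' z) = z) ∧ (∀ z, u' (u z) = z) := by
  rintro u ⟨l, hl, rfl⟩
  induction l with
  | nil => exact absurd rfl hl
  | cons a t ih =>
      rcases eq_or_ne t [] with rfl | ht
      · refine ⟨F' a, mem_gen_single F' a, fun z => (hFF' a).1 z, fun z => (hFF' a).2 z⟩
      · obtain ⟨v', hv', hv1, hv2⟩ := ih ht
        refine ⟨v' ∘ F' a, mem_gen_comp hv' (mem_gen_single F' a), fun z => ?_, fun z => ?_⟩
        · have e : (List.foldr (fun i h => F i ∘ h) id (a :: t)) ((v' ∘ F' a) z)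
              = F a (List.foldr (fun i h => F i ∘ h) id t (v' (F' a z))) := rfl
          rw [e, hv1, (hFF' a).1]
        · have e : (v' ∘ F' a) ((List.foldr (fun i h => F i ∘ h) id (a :: t)) z)
              = v' (F' a (F a (List.foldr (fun i h => F i ∘ h) id t z))) := rfl
          rw [e, (hFF' a).2, hv2]


lemma gen_conj {θ : OnePoint ℂ → OnePoint ℂ} (hθθ : ∀ z, θ (θ z) = z)
    (hconj : ∀ i, θ ∘ F i ∘ θ = F' i) :
    ∀ u ∈ genSemigroup F, θ ∘ u ∘ θ ∈ genSemigroup F' := by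
  rintro u ⟨l, hl, rfl⟩
  induction l with
  | nil => exact absurd rfl hl
  | cons a t ih =>
      rcases eq_or_ne t [] with rfl | ht
      · have e : θ ∘ (List.foldr (fun i h => F i ∘ h) id [a]) ∘ θ = F' a := by
          rw [← hconj a]; rfl
        rw [e]
        exact mem_gen_single F' a
      · have h2 := ih ht
        have e : θ ∘ (List.foldr (fun i h => F i ∘ h) id (a :: t)) ∘ θ
            = (θ ∘ F a ∘ θ) ∘ (θ ∘ (List.foldr (fun i h => F i ∘ h) id t) ∘ θ) := by
          funext z
          simp only [Function.comp_apply, List.foldr_cons]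
          rw [hθθ]
        rw [e, hconj a]
        exact mem_gen_comp (mem_gen_single F' a) h2


section Dyn
variable {G G' : Set (OnePoint ℂ → OnePoint ℂ)}

/-- Forward invariance of the Fatou set. -/
lemma fatou_forward (hGc : ∀ u ∈ G, ∀ v ∈ G, u ∘ v ∈ G)
    {u : OnePoint ℂ → OnePoint ℂ} (hu : u ∈ G) (huh : IsHomeomorph u)
    {z : OnePoint ℂ} (hz : z ∈ fatouSet G) : u z ∈ fatouSet G := by
  obtain ⟨U, hU, hzU, hequi⟩ := mem_fatou_iff.mp hz
  refine mem_fatou_iff.mpr ⟨u '' U, huh.isOpenMap U hU, ⟨z, hzU, rfl⟩, ?_⟩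
  rintro x' ⟨x, hxU, rfl⟩ ε hε
  obtain ⟨δ, hδ, hcl⟩ := hequi x hxU ε hε
  have hW : {y | d x y < δ} ∈ 𝓝 x := (nhds_basis x).mem_of_mem hδ
  have hW' : u '' {y | d x y < δ} ∈ 𝓝 (u x) := huh.isOpenMap.image_mem_nhds hW
  obtain ⟨δ', hδ', hsub⟩ := (nhds_basis (u x)).mem_iff.mp hW'
  refine ⟨δ', hδ', ?_⟩
  rintro y' ⟨y, hyU, rfl⟩ hd w hw
  obtain ⟨y₂, hy₂, hy₂e⟩ := hsub hd
  have hyy : y₂ = y := huh.bijective.1 hy₂e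
  rw [hyy] at hy₂
  exact hcl y hyU hy₂ (w ∘ u) (hGc w hw u hu)

/-- The kernel Julia set is contained in the Julia set. -/
lemma kernel_subset_julia (hGc : ∀ u ∈ G, ∀ v ∈ G, u ∘ v ∈ G)
    {u₀ : OnePoint ℂ → OnePoint ℂ} (hu₀ : u₀ ∈ G) (hu₀h : IsHomeomorph u₀) :
    kernelJulia G ⊆ juliaSet G := by
  intro z hz
  have h1 : u₀ z ∈ juliaSet G := mem_iInter₂.mp hz u₀ hu₀
  by_contra hzF
  exact h1 (fatou_forward hGc hu₀ hu₀h (not_not.mp hzF))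

/-- When the two Julia sets agree, the kernel Julia set equals the Julia set. -/
lemma kernel_eq_julia_of_eq
    (hGc : ∀ u ∈ G, ∀ v ∈ G, u ∘ v ∈ G) (hG'c : ∀ u ∈ G', ∀ v ∈ G', u ∘ v ∈ G')
    (hG'h : ∀ u ∈ G', IsHomeomorph u)
    (hpair : ∀ u ∈ G, ∃ u' ∈ G', (∀ z, u (u' z) = z) ∧ (∀ z, u' (u z) = z))
    {u₀ : OnePoint ℂ → OnePoint ℂ} (hu₀ : u₀ ∈ G) (hu₀h : IsHomeomorph u₀)
    (hJ : juliaSet G = juliaSet G') : kernelJulia G = juliaSet G := by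
  apply Subset.antisymm (kernel_subset_julia hGc hu₀ hu₀h)
  intro z hz
  apply mem_iInter₂.mpr
  intro u hu
  obtain ⟨u', hu', h1, h2⟩ := hpair u hu
  show u z ∈ juliaSet G
  by_contra huz
  have huzF : u z ∈ fatouSet G := not_not.mp huz
  have hF : fatouSet G = fatouSet G' := by
    have := congrArg compl hJ
    simpa [juliaSet, compl_compl] using this
  have hstep : u' (u z) ∈ fatouSet G' := fatou_forward hG'c hu' (hG'h u' hu') (hF ▸ huzF)
  rw [h2] at hstep
  rw [← hF] at hstep
  exact hz hstep

/-- **Main lemma**: if the kernel Julia set of `G` contains a point with two distinct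
images, then the Julia set of the inverse semigroup is contained in that of `G`. -/
lemma julia_subset_of_kernel
    (hmul' : ∀ u' ∈ G', IsMult u')
    (hpair' : ∀ u' ∈ G', ∃ u ∈ G, (∀ z, u (u' z) = z) ∧ (∀ z, u' (u z) = z))
    (hGc : ∀ u ∈ G, ∀ v ∈ G, u ∘ v ∈ G)
    {z₀ : OnePoint ℂ} {v w : OnePoint ℂ → OnePoint ℂ}
    (hz₀ : z₀ ∈ kernelJulia G) (hv : v ∈ G) (hw : w ∈ G) (hvw : v z₀ ≠ w z₀) :
    juliaSet G' ⊆ juliaSet G := by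
  set a := v z₀ with ha_def
  set b := w z₀ with hb_def
  have hab : 0 < d a b := d_pos hvw
  have ha : ∀ u ∈ G, u a ∈ juliaSet G := fun u hu =>
    mem_iInter₂.mp hz₀ (u ∘ v) (hGc u hu v hv)
  have hb : ∀ u ∈ G, u b ∈ juliaSet G := fun u hu =>
    mem_iInter₂.mp hz₀ (u ∘ w) (hGc u hu w hw)
  intro c hc
  apply mem_julia_of_approx
  intro t ht
  set s := t / 3 with hs_def
  have hs : 0 < s := by positivity
  -- c is not in the Fatou set of G', so the ball V of radius s around c is not a witness
  have hV : ¬ (∀ x ∈ {y | d c y < s}, ∀ ε > 0, ∃ δ > 0, ∀ y ∈ {y | d c y < s}, d x y < δ →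
      ∀ u ∈ G', d (u x) (u y) < ε) := by
    intro hcon
    exact hc (mem_fatou_iff.mpr ⟨_, isOpen_ball c s, by simp [d_self c, hs], hcon⟩)
  push_neg at hV
  obtain ⟨x, hxV, ε, hε, hV⟩ := hV
  set δ := min s (ε * (d a b) * s ^ 2 / 16) with hδ_def
  have hδ : 0 < δ := lt_min hs (by positivity)
  obtain ⟨y, hyV, hxy, u', hu', hfar⟩ := hV δ hδ
  obtain ⟨u, hu, hid1, hid2⟩ := hpair' u' hu'
  obtain ⟨K, hKpos, hKmul⟩ := hmul' u' hu'
  -- the two candidate Julia points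
  set za := u a with hza_def
  set zb := u b with hzb_def
  have hzaJ : za ∈ juliaSet G := ha u hu
  have hzbJ : zb ∈ juliaSet G := hb u hu
  -- key estimate: not both za far from x and zb far from y
  have hkey : d x za < s ∨ d y zb < s := by
    by_contra hcon
    push_neg at hcon
    obtain ⟨hxa, hyb⟩ := hcon
    -- abbreviations
    have e1 : K x * K za * d x za ≤ 2 := by
      rw [← hKmul]; exact d_le_two _ _
    have e2 : K y * K zb * d y zb ≤ 2 := by
      rw [← hKmul]; exact d_le_two _ _
    have e3 : ε ≤ K x * K y * d x y := by
      rw [← hKmul]; exact hfar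
    have e4 : K za * K zb * d za zb = d a b := by
      have h6 := hKmul za zb
      have ea : u' za = a := hid2 a
      have eb : u' zb = b := hid2 b
      rw [ea, eb] at h6
      exact h6.symm
    have e5 : d za zb ≤ 2 := d_le_two _ _
    have hKx := hKpos x; have hKy := hKpos y
    have hKza := hKpos za; have hKzb := hKpos zb
    have hdxy : 0 ≤ d x y := d_nonneg _ _
    have hdxa : 0 ≤ d x za := d_nonneg _ _
    have hdyb : 0 ≤ d y zb := d_nonneg _ _
    -- combined product bound
    have p1 : (K x * K za * d x za) * (K y * K zb * d y zb) ≤ 2 * 2 :=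
      mul_le_mul e1 e2 (mul_nonneg (mul_nonneg hKy.le hKzb.le) hdyb) (by norm_num)
    have hQ : 0 ≤ K za * K zb * (d x za * d y zb) :=
      mul_nonneg (mul_nonneg hKza.le hKzb.le) (mul_nonneg hdxa hdyb)
    -- ε * (K za * K zb * d x za * d y zb) ≤ 4 * d x y
    have p2 : ε * (K za * K zb * (d x za * d y zb)) ≤ 4 * d x y := by
      have p2a : ε * (K za * K zb * (d x za * d y zb))
          ≤ (K x * K y * d x y) * (K za * K zb * (d x za * d y zb)) :=
        mul_le_mul_of_nonneg_right e3 hQ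
      have p2b : (K x * K y * d x y) * (K za * K zb * (d x za * d y zb))
          = d x y * ((K x * K za * d x za) * (K y * K zb * d y zb)) := by ring
      have p2c : d x y * ((K x * K za * d x za) * (K y * K zb * d y zb)) ≤ d x y * (2 * 2) :=
        mul_le_mul_of_nonneg_left p1 hdxy
      calc ε * (K za * K zb * (d x za * d y zb))
          ≤ (K x * K y * d x y) * (K za * K zb * (d x za * d y zb)) := p2a
        _ = d x y * ((K x * K za * d x za) * (K y * K zb * d y zb)) := p2b
        _ ≤ d x y * (2 * 2) := p2c
        _ = 4 * d x y := by ring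
    have p3 : d a b / 2 ≤ K za * K zb := by
      have h6 : 0 ≤ (K za * K zb) * (2 - d za zb) :=
        mul_nonneg (mul_pos hKza hKzb).le (by linarith)
      nlinarith [e4]
    have p4 : (d a b / 2) * s ^ 2 ≤ K za * K zb * (d x za * d y zb) := by
      have hss : s * s ≤ d x za * d y zb := mul_le_mul hxa hyb hs.le hdxa
      have := mul_le_mul p3 hss (by positivity) (mul_nonneg hKza.le hKzb.le)
      nlinarith [this]
    have p5 : d x y < δ := hxy
    have p6 : δ ≤ ε * (d a b) * s ^ 2 / 16 := min_le_right _ _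
    have p7 : ε * ((d a b / 2) * s ^ 2) ≤ ε * (K za * K zb * (d x za * d y zb)) :=
      mul_le_mul_of_nonneg_left p4 hε.le
    have hE1 : ε * ((d a b / 2) * s ^ 2) = ε * d a b * s ^ 2 / 2 := by ring
    have hpos : 0 < ε * d a b * s ^ 2 := by positivity
    linarith
  rcases hkey with hcase | hcase
  · refine ⟨za, hzaJ, ?_⟩
    have := d_triangle c x za
    have h1 : d c x < s := hxV
    calc d c za ≤ d c x + d x za := d_triangle c x za
      _ < s + s := by linarith
      _ < t := by rw [hs_def]; linarith
  · refine ⟨zb, hzbJ, ?_⟩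
    have h1 : d c y < s := hyV
    calc d c zb ≤ d c y + d y zb := d_triangle c y zb
      _ < s + s := by linarith
      _ < t := by rw [hs_def]; linarith

/-- An isometric involution is continuous. -/
lemma continuous_of_isometry {θ : OnePoint ℂ → OnePoint ℂ}
    (hiso : ∀ z w, d (θ z) (θ w) = d z w) : Continuous θ := by
  rw [continuous_iff_continuousAt]
  intro x
  rw [ContinuousAt, (nhds_basis x).tendsto_iff (nhds_basis (θ x))]
  intro ε hε
  exact ⟨ε, hε, fun y hy => by rw [mem_setOf_eq, hiso]; exact hy⟩

/-- Transport of the Fatou set under an isometric involution conjugating `G` into `G'`. -/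
lemma fatou_transport {θ : OnePoint ℂ → OnePoint ℂ}
    (hiso : ∀ z w, d (θ z) (θ w) = d z w) (hθθ : ∀ z, θ (θ z) = z)
    (hconj : ∀ u ∈ G, (θ ∘ u ∘ θ) ∈ G') :
    ∀ x' ∈ fatouSet G', θ x' ∈ fatouSet G := by
  intro x' hx'
  obtain ⟨U', hU', hxU', hequi⟩ := mem_fatou_iff.mp hx'
  refine mem_fatou_iff.mpr ⟨θ ⁻¹' U', hU'.preimage (continuous_of_isometry hiso), ?_, ?_⟩
  · show θ (θ x') ∈ U'
    rw [hθθ]; exact hxU'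
  · intro x hx ε hε
    obtain ⟨δ, hδ, hcl⟩ := hequi (θ x) hx ε hε
    refine ⟨δ, hδ, ?_⟩
    intro y hy hxy u hu
    have h1 : d (θ x) (θ y) < δ := by rw [hiso]; exact hxy
    have h2 := hcl (θ y) hy h1 (θ ∘ u ∘ θ) (hconj u hu)
    have e1 : (θ ∘ u ∘ θ) (θ x) = θ (u x) := by
      show θ (u (θ (θ x))) = θ (u x)
      rw [hθθ]
    have e2 : (θ ∘ u ∘ θ) (θ y) = θ (u y) := by
      show θ (u (θ (θ y))) = θ (u y)
      rw [hθθ]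
    rw [e1, e2, hiso] at h2
    exact h2

/-- Transport of the Julia set. -/
lemma julia_transport {θ : OnePoint ℂ → OnePoint ℂ}
    (hiso : ∀ z w, d (θ z) (θ w) = d z w) (hθθ : ∀ z, θ (θ z) = z)
    (hconj : ∀ u ∈ G, (θ ∘ u ∘ θ) ∈ G') :
    ∀ z ∈ juliaSet G, θ z ∈ juliaSet G' := by
  intro z hz hθz
  apply hz
  have := fatou_transport (G := G) (G' := G') hiso hθθ hconj (θ z) hθz
  rwa [hθθ] at this

/-- Transport of the kernel Julia set. -/
lemma kernel_transport {θ : OnePoint ℂ → OnePoint ℂ}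
    (hiso : ∀ z w, d (θ z) (θ w) = d z w) (hθθ : ∀ z, θ (θ z) = z)
    (hconjG : ∀ u ∈ G, (θ ∘ u ∘ θ) ∈ G') (hconjG' : ∀ u ∈ G', (θ ∘ u ∘ θ) ∈ G)
    {z₀ : OnePoint ℂ} (hz₀ : z₀ ∈ kernelJulia G) : θ z₀ ∈ kernelJulia G' := by
  apply mem_iInter₂.mpr
  intro u' hu'
  show u' (θ z₀) ∈ juliaSet G'
  have hu : θ ∘ u' ∘ θ ∈ G := hconjG' u' hu'
  have h1 : (θ ∘ u' ∘ θ) z₀ ∈ juliaSet G := mem_iInter₂.mp hz₀ _ hu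
  have h2 := julia_transport (G := G) (G' := G') hiso hθθ hconjG _ h1
  have e : θ ((θ ∘ u' ∘ θ) z₀) = u' (θ z₀) := by
    show θ (θ (u' (θ z₀))) = u' (θ z₀)
    rw [hθθ]
  rwa [e] at h2
end Dyn
/-! ### Specific computations -/

lemma sig_injective : Function.Injective sig := fun a b h => by
  have := isometry_sig a b
  rw [h, d_self] at this
  exact d_eq_zero_iff.mp this.symm

/-- `(F ∘ σ)` is an involution for `F z = γ + 1/z`. -/
lemma invol (γ : ℂ) (hγ : γ ≠ 0) (F : OnePoint ℂ → OnePoint ℂ)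
    (hFz : ∀ z : ℂ, z ≠ 0 → F (z : OnePoint ℂ) = ((γ + z⁻¹ : ℂ) : OnePoint ℂ))
    (hF0 : F ((0 : ℂ) : OnePoint ℂ) = OnePoint.infty)
    (hFi : F OnePoint.infty = ((γ : ℂ) : OnePoint ℂ)) :
    ∀ z, F (sig (F (sig z))) = z := by
  intro z
  induction z using OnePoint.rec with
  | infty => rw [sig_infty, hF0, sig_infty, hF0]
  | coe z =>
      by_cases hz : z = 0
      · subst hz
        rw [sig_zero, hFi, sig_coe γ hγ, hFz _ (by simpa using inv_ne_zero hγ),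
          show (γ + (-γ⁻¹)⁻¹ : ℂ) = 0 from by rw [inv_neg, inv_inv]; ring]
      · have hsz : (-z⁻¹ : ℂ) ≠ 0 := by simpa using inv_ne_zero hz
        rw [sig_coe z hz, hFz _ hsz,
          show (γ + (-z⁻¹)⁻¹ : ℂ) = γ - z from by rw [inv_neg, inv_inv]; ring]
        by_cases hzγ : γ - z = 0
        · rw [hzγ, sig_zero, hFi]
          have hzz : z = γ := by linear_combination -hzγ
          rw [hzz]
        · rw [sig_coe _ hzγ, hFz _ (by simpa using inv_ne_zero hzγ),
            show (γ + (-(γ - z)⁻¹)⁻¹ : ℂ) = z from by rw [inv_neg, inv_inv]; ring]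

lemma sig_conj_eq {F F' : OnePoint ℂ → OnePoint ℂ}
    (hinvol : ∀ z, F (sig (F (sig z))) = z)
    (hl : ∀ z, F' (F z) = z) : sig ∘ F ∘ sig = F' := by
  funext z
  have h1 := hl (sig (F (sig z)))
  rw [hinvol z] at h1
  exact h1.symm
end Caruso

open Caruso

/-- **Theorem (Caruso semigroups dichotomy).** For `f(z) = β + 1/z`, `g(z) = -β + 1/z`,
`S_β = ⟨f, g⟩` and `S_β' = ⟨f⁻¹, g⁻¹⟩`, either the two Julia sets differ and both kernel
Julia sets are empty, or they coincide and both kernel Julia sets equal the common Julia set. -/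
theorem caruso_dichotomy (β : ℂ) (hβ : β ≠ 0)
    (f g f' g' : OnePoint ℂ → OnePoint ℂ)
    (hf : IsHomeomorph f) (hg : IsHomeomorph g)
    (hfz : ∀ z : ℂ, z ≠ 0 → f (z : OnePoint ℂ) = ((β + z⁻¹ : ℂ) : OnePoint ℂ))
    (hgz : ∀ z : ℂ, z ≠ 0 → g (z : OnePoint ℂ) = ((-β + z⁻¹ : ℂ) : OnePoint ℂ))
    (hf0 : f ((0 : ℂ) : OnePoint ℂ) = OnePoint.infty)
    (hg0 : g ((0 : ℂ) : OnePoint ℂ) = OnePoint.infty)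
    (hfi : f OnePoint.infty = ((β : ℂ) : OnePoint ℂ))
    (hgi : g OnePoint.infty = ((-β : ℂ) : OnePoint ℂ))
    (hf' : Function.LeftInverse f' f ∧ Function.RightInverse f' f)
    (hg' : Function.LeftInverse g' g ∧ Function.RightInverse g' g) :
    (juliaSet (genSemigroup ![f, g]) ≠ juliaSet (genSemigroup ![f', g']) ∧
      kernelJulia (genSemigroup ![f, g]) = ∅ ∧ kernelJulia (genSemigroup ![f', g']) = ∅) ∨
    (juliaSet (genSemigroup ![f, g]) = juliaSet (genSemigroup ![f', g']) ∧
      kernelJulia (genSemigroup ![f, g]) = juliaSet (genSemigroup ![f, g]) ∧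
      kernelJulia (genSemigroup ![f', g']) = juliaSet (genSemigroup ![f', g'])) := by
  have hβ' : (-β : ℂ) ≠ 0 := neg_ne_zero.mpr hβ
  set S := genSemigroup ![f, g] with hS_def
  set S' := genSemigroup ![f', g'] with hS'_def
  -- values of generator vectors
  have hv0 : (![f, g]) 0 = f := rfl
  have hv1 : (![f, g]) 1 = g := rfl
  have hw0 : (![f', g']) 0 = f' := rfl
  have hw1 : (![f', g']) 1 = g' := rfl
  -- membership of generators
  have hfmem : f ∈ S := hv0 ▸ mem_gen_single ![f, g] 0
  have hgmem : g ∈ S := hv1 ▸ mem_gen_single ![f, g] 1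
  have hf'mem : f' ∈ S' := hw0 ▸ mem_gen_single ![f', g'] 0
  have hg'mem : g' ∈ S' := hw1 ▸ mem_gen_single ![f', g'] 1
  -- composition closure
  have hSc : ∀ u ∈ S, ∀ v ∈ S, u ∘ v ∈ S := fun u hu v hv => mem_gen_comp hu hv
  have hS'c : ∀ u ∈ S', ∀ v ∈ S', u ∘ v ∈ S' := fun u hu v hv => mem_gen_comp hu hv
  -- multiplier property of the generators
  have hfeq : f = Tr β ∘ Inv := by
    funext z
    induction z using OnePoint.rec with
    | infty =>
        show f OnePoint.infty = Tr β (Inv OnePoint.infty)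
        rw [hfi, Inv_infty, Tr_coe]
        norm_num
    | coe z =>
        by_cases hz : z = 0
        · subst hz
          show f _ = Tr β (Inv _)
          rw [hf0, Inv_zero, Tr_infty]
        · show f _ = Tr β (Inv _)
          rw [hfz z hz, Inv_coe z hz, Tr_coe, add_comm]
  have hgeq : g = Tr (-β) ∘ Inv := by
    funext z
    induction z using OnePoint.rec with
    | infty =>
        show g OnePoint.infty = Tr (-β) (Inv OnePoint.infty)
        rw [hgi, Inv_infty, Tr_coe]
        norm_num
    | coe z =>
        by_cases hz : z = 0
        · subst hz
          show g _ = Tr (-β) (Inv _)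
          rw [hg0, Inv_zero, Tr_infty]
        · show g _ = Tr (-β) (Inv _)
          rw [hgz z hz, Inv_coe z hz, Tr_coe, add_comm]
  have hmf : IsMult f := hfeq ▸ (isMult_Tr β).comp isMult_Inv
  have hmg : IsMult g := hgeq ▸ (isMult_Tr (-β)).comp isMult_Inv
  have hmf' : IsMult f' := hmf.of_inverse hf'.2
  have hmg' : IsMult g' := hmg.of_inverse hg'.2
  -- all members are multiplier maps
  have hmultS : ∀ u ∈ S, IsMult u := by
    apply gen_induction _ isMult_id
    intro i u hu
    fin_cases i
    · exact hmf.comp hu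
    · exact hmg.comp hu
  have hmultS' : ∀ u ∈ S', IsMult u := by
    apply gen_induction _ isMult_id
    intro i u hu
    fin_cases i
    · exact hmf'.comp hu
    · exact hmg'.comp hu
  -- homeomorphism property
  have hf'h : IsHomeomorph f' := by
    obtain ⟨e, he⟩ := isHomeomorph_iff_exists_homeomorph.mp hf
    have heq : f' = ⇑e.symm := by
      funext z
      have h1 : e (f' z) = z := by rw [he]; exact hf'.2 z
      calc f' z = e.symm (e (f' z)) := (e.symm_apply_apply _).symm
        _ = e.symm z := by rw [h1]
    rw [heq]
    exact e.symm.isHomeomorph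
  have hg'h : IsHomeomorph g' := by
    obtain ⟨e, he⟩ := isHomeomorph_iff_exists_homeomorph.mp hg
    have heq : g' = ⇑e.symm := by
      funext z
      have h1 : e (g' z) = z := by rw [he]; exact hg'.2 z
      calc g' z = e.symm (e (g' z)) := (e.symm_apply_apply _).symm
        _ = e.symm z := by rw [h1]
    rw [heq]
    exact e.symm.isHomeomorph
  have hShomeo : ∀ u ∈ S, IsHomeomorph u := by
    apply gen_induction _ IsHomeomorph.id
    intro i u hu
    fin_cases i
    · exact hf.comp hu
    · exact hg.comp hu
  have hS'homeo : ∀ u ∈ S', IsHomeomorph u := by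
    apply gen_induction _ IsHomeomorph.id
    intro i u hu
    fin_cases i
    · exact hf'h.comp hu
    · exact hg'h.comp hu
  -- inverse pairing
  have hFF' : ∀ i : Fin 2, (∀ z, (![f, g]) i ((![f', g']) i z) = z) ∧
      (∀ z, (![f', g']) i ((![f, g]) i z) = z) := by
    intro i
    fin_cases i
    · exact ⟨hf'.2, hf'.1⟩
    · exact ⟨hg'.2, hg'.1⟩
  have hFF'swap : ∀ i : Fin 2, (∀ z, (![f', g']) i ((![f, g]) i z) = z) ∧
      (∀ z, (![f, g]) i ((![f', g']) i z) = z) := by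
    intro i
    fin_cases i
    · exact ⟨hf'.1, hf'.2⟩
    · exact ⟨hg'.1, hg'.2⟩
  have hpairSS' : ∀ u ∈ S, ∃ u' ∈ S', (∀ z, u (u' z) = z) ∧ (∀ z, u' (u z) = z) :=
    gen_inverse hFF'
  have hpairS'S : ∀ u ∈ S', ∃ u' ∈ S, (∀ z, u (u' z) = z) ∧ (∀ z, u' (u z) = z) :=
    gen_inverse hFF'swap
  have hpairSS'rev : ∀ u' ∈ S', ∃ u ∈ S, (∀ z, u (u' z) = z) ∧ (∀ z, u' (u z) = z) := by
    intro a ha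
    obtain ⟨b, hb, h1, h2⟩ := gen_inverse hFF'swap a ha
    exact ⟨b, hb, h2, h1⟩
  have hpairS'Srev : ∀ u' ∈ S, ∃ u ∈ S', (∀ z, u (u' z) = z) ∧ (∀ z, u' (u z) = z) := by
    intro a ha
    obtain ⟨b, hb, h1, h2⟩ := gen_inverse hFF' a ha
    exact ⟨b, hb, h2, h1⟩
  -- σ-conjugation
  have hinvf : ∀ z, f (sig (f (sig z))) = z := invol β hβ f hfz hf0 hfi
  have hinvg : ∀ z, g (sig (g (sig z))) = z := invol (-β) hβ' g hgz hg0 hgi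
  have hconjf : sig ∘ f ∘ sig = f' := sig_conj_eq hinvf hf'.1
  have hconjg : sig ∘ g ∘ sig = g' := sig_conj_eq hinvg hg'.1
  have hconjgen : ∀ i : Fin 2, sig ∘ (![f, g]) i ∘ sig = (![f', g']) i := by
    intro i
    fin_cases i
    · exact hconjf
    · exact hconjg
  have hconjgen' : ∀ i : Fin 2, sig ∘ (![f', g']) i ∘ sig = (![f, g]) i := by
    intro i
    have h1 := hconjgen i
    rw [← h1]
    funext z
    show sig (sig ((![f, g]) i (sig (sig z)))) = (![f, g]) i z
    rw [sig_sig, sig_sig]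
  have hconjSS' : ∀ u ∈ S, sig ∘ u ∘ sig ∈ S' := gen_conj sig_sig hconjgen
  have hconjS'S : ∀ u ∈ S', sig ∘ u ∘ sig ∈ S := gen_conj sig_sig hconjgen'
  -- pair lemma
  have hββ : (β : ℂ) ≠ -β := fun h => hβ (by linear_combination h / 2)
  have pair_exists : ∀ ζ : OnePoint ℂ, ∃ v w, v ∈ S ∧ w ∈ S ∧ v ζ ≠ w ζ := by
    intro ζ
    induction ζ using OnePoint.rec with
    | infty =>
        refine ⟨f, g, hfmem, hgmem, ?_⟩
        rw [hfi, hgi]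
        intro h
        exact hββ (OnePoint.coe_eq_coe.mp h)
    | coe z =>
        by_cases hz : z = 0
        · subst hz
          refine ⟨f ∘ f, g ∘ f, hSc f hfmem f hfmem, hSc g hgmem f hfmem, ?_⟩
          show f (f _) ≠ g (f _)
          rw [hf0, hfi, hgi]
          intro h
          exact hββ (OnePoint.coe_eq_coe.mp h)
        · refine ⟨f, g, hfmem, hgmem, ?_⟩
          rw [hfz z hz, hgz z hz]
          intro h
          have h2 := OnePoint.coe_eq_coe.mp h
          exact hββ (by linear_combination h2)
  -- key lemma: a kernel point of S forces the Julia sets to agree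
  have keylem : ∀ z₀ ∈ kernelJulia S, juliaSet S = juliaSet S' := by
    intro z₀ hz₀
    obtain ⟨v, w, hv, hw, hvw⟩ := pair_exists z₀
    have h1 : juliaSet S' ⊆ juliaSet S :=
      julia_subset_of_kernel hmultS' hpairSS'rev hSc hz₀ hv hw hvw
    -- transport the kernel point
    have hζ : sig z₀ ∈ kernelJulia S' :=
      kernel_transport isometry_sig sig_sig hconjSS' hconjS'S hz₀
    obtain ⟨v₂, w₂, hv₂, hw₂, hvw₂⟩ := pair_exists z₀
    have hv' : sig ∘ v₂ ∘ sig ∈ S' := hconjSS' v₂ hv₂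
    have hw' : sig ∘ w₂ ∘ sig ∈ S' := hconjSS' w₂ hw₂
    have hvw' : (sig ∘ v₂ ∘ sig) (sig z₀) ≠ (sig ∘ w₂ ∘ sig) (sig z₀) := by
      show sig (v₂ (sig (sig z₀))) ≠ sig (w₂ (sig (sig z₀)))
      rw [sig_sig]
      exact fun h => hvw₂ (sig_injective h)
    have h2 : juliaSet S ⊆ juliaSet S' :=
      julia_subset_of_kernel hmultS hpairS'Srev hS'c hζ hv' hw' hvw'
    exact Subset.antisymm h2 h1
  by_cases hJ : juliaSet S = juliaSet S'
  · right
    refine ⟨hJ, ?_, ?_⟩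
    · exact kernel_eq_julia_of_eq hSc hS'c hS'homeo hpairSS' hfmem hf hJ
    · exact kernel_eq_julia_of_eq hS'c hSc hShomeo hpairS'S hf'mem hf'h hJ.symm
  · left
    refine ⟨hJ, ?_, ?_⟩
    · rw [eq_empty_iff_forall_notMem]
      intro z₀ hz₀
      exact hJ (keylem z₀ hz₀)
    · rw [eq_empty_iff_forall_notMem]
      intro z₀ hz₀
      have hζ : sig z₀ ∈ kernelJulia S :=
        kernel_transport isometry_sig sig_sig hconjS'S hconjSS' hz₀
      exact hJ (keylem (sig z₀) hζ)
end
end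

section
/- Let G = ⟨f₁,…,f_k⟩ be a finitely generated Möbius semigroup with J_ker(G) = ∅ and J(G) ≠ ∅. Then J(G) contains at least three points. -/
open MeasureTheory Topology Filter Set

noncomputable section

/-- Every element of the generated semigroup is a homeomorphism. -/
lemma genSemigroup_isHomeomorph {k : ℕ} {f : Fin k → OnePoint ℂ → OnePoint ℂ}
    (hmob : ∀ j, IsMobius (f j)) {g : OnePoint ℂ → OnePoint ℂ}
    (hg : g ∈ genSemigroup f) : IsHomeomorph g := by
  obtain ⟨l, -, rfl⟩ := hg
  induction l with
  | nil => exact IsHomeomorph.id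
  | cons i l ih => exact ((hmob i).1).comp ih

/-- The semigroup is closed under composition. -/
lemma genSemigroup_comp_mem {k : ℕ} {f : Fin k → OnePoint ℂ → OnePoint ℂ}
    {g h : OnePoint ℂ → OnePoint ℂ} (hg : g ∈ genSemigroup f) (hh : h ∈ genSemigroup f) :
    g ∘ h ∈ genSemigroup f := by
  obtain ⟨l₁, hl₁, rfl⟩ := hg
  obtain ⟨l₂, hl₂, rfl⟩ := hh
  refine ⟨l₁ ++ l₂, by simp [hl₁], ?_⟩
  clear hl₁ hl₂
  induction l₁ with
  | nil => simp
  | cons i l ih => simp only [List.foldr_cons, List.cons_append, ih, Function.comp_assoc]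

/-- The Fatou set is forward invariant: `g(F(G)) ⊆ F(G)` for `g ∈ G`. -/
lemma fatou_forward_invariant {k : ℕ} {f : Fin k → OnePoint ℂ → OnePoint ℂ}
    (hmob : ∀ j, IsMobius (f j)) {g : OnePoint ℂ → OnePoint ℂ}
    (hg : g ∈ genSemigroup f) {z : OnePoint ℂ}
    (hz : z ∈ fatouSet (genSemigroup f)) : g z ∈ fatouSet (genSemigroup f) := by
  letI : UniformSpace (OnePoint ℂ) := uniformSpaceOfCompactR1
  obtain ⟨U, hUopen, hzU, hUeq⟩ := hz
  have hgh : IsHomeomorph g := genSemigroup_isHomeomorph hmob hg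
  refine ⟨g '' U, hgh.isOpenMap U hUopen, ⟨z, hzU, rfl⟩, ?_⟩
  rintro y ⟨x, hxU, rfl⟩ W hW
  have h1 := hUeq x hxU W hW
  rw [← hgh.isEmbedding.map_nhdsWithin_eq U x, eventually_map] at *
  filter_upwards [h1] with x' hx' i
  exact hx' ⟨i.1 ∘ g, genSemigroup_comp_mem i.2 hg⟩

/-- **Claim (a): if `J_ker(G) = ∅` and `J(G) ≠ ∅` then `J(G)` has at least three points.** -/
theorem julia_three_points {k : ℕ} (hk : 0 < k)
    (f : Fin k → OnePoint ℂ → OnePoint ℂ) (hmob : ∀ j, IsMobius (f j))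
    (hker : kernelJulia (genSemigroup f) = ∅)
    (hJ : juliaSet (genSemigroup f) ≠ ∅) :
    3 ≤ (juliaSet (genSemigroup f)).encard := by
  by_contra h3
  set G := genSemigroup f with hG
  set J := juliaSet G with hJdef
  -- J is finite
  have hfin : J.Finite :=
    Set.encard_ne_top_iff.mp (ne_top_of_lt (lt_of_not_ge h3))
  -- backward invariance: g ⁻¹' J ⊆ J
  have hback : ∀ g ∈ G, g ⁻¹' J ⊆ g ⁻¹' J ∧ g ⁻¹' J ⊆ J := by
    intro g hgG
    refine ⟨subset_rfl, fun w hw ↦ ?_⟩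
    by_contra hwF
    have hwF' : w ∈ fatouSet G := not_not.mp hwF
    exact hw (fatou_forward_invariant hmob hgG hwF')
  -- equality by cardinality
  have heq : ∀ g ∈ G, g ⁻¹' J = J := by
    intro g hgG
    have hgh : IsHomeomorph g := genSemigroup_isHomeomorph hmob hgG
    have hcard : (g ⁻¹' J).encard = J.encard :=
      Set.encard_preimage_of_injective_subset_range hgh.injective
        (by rw [hgh.surjective.range_eq]; exact Set.subset_univ _)
    exact hfin.eq_of_subset_of_encard_le' (hback g hgG).2 hcard.symm.le
  -- hence the kernel Julia set equals J
  have hGne : (f ⟨0, hk⟩) ∈ G := ⟨[⟨0, hk⟩], by simp, by simp⟩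
  have hkerJ : kernelJulia G = J := by
    apply Set.Subset.antisymm
    · intro z hz
      have := Set.mem_iInter₂.mp hz _ hGne
      rwa [heq _ hGne] at this
    · intro z hz
      exact Set.mem_iInter₂.mpr fun g hgG ↦ by rw [heq g hgG]; exact hz
  rw [hkerJ] at hker
  exact hJ hker
end
end

section
/- Let G = ⟨f₁,…,f_k⟩ be a finitely generated Möbius semigroup with J_ker(G) = ∅ and J(G) ≠ ∅, and let L be a minimal set of G. Then L ∩ F(G) ≠ ∅. -/
open MeasureTheory Topology Filter Set

noncomputable section

/-- **Claim (c): a minimal set of `G` meets the Fatou set.** -/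
theorem minimal_set_meets_fatou {k : ℕ} (hk : 0 < k)
    (f : Fin k → OnePoint ℂ → OnePoint ℂ) (hmob : ∀ j, IsMobius (f j))
    (hker : kernelJulia (genSemigroup f) = ∅)
    (hJ : juliaSet (genSemigroup f) ≠ ∅)
    (L : Set (OnePoint ℂ)) (hL : IsMinimalSet (genSemigroup f) L) :
    (L ∩ fatouSet (genSemigroup f)).Nonempty := by
  obtain ⟨⟨z, hz⟩, _, hmin⟩ := hL
  have hzk : z ∉ kernelJulia (genSemigroup f) := by
    rw [hker]; exact notMem_empty z
  simp only [kernelJulia, mem_iInter, not_forall] at hzk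
  obtain ⟨g, hg, hgz⟩ := hzk
  refine ⟨g z, ?_, ?_⟩
  · rw [← hmin z hz]
    exact subset_closure ⟨g, hg, rfl⟩
  · simpa [juliaSet] using hgz
end
end
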